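/- Let ℓ : ℕ → ℝ be positive, let M ≥ 1 be an integer with ℓ(M) ≤ e^{−1}, and suppose ℓ(2n) ≤ ℓ(n)² for all integers n ≥ M. Suppose in addition there is a nonnegative function h : ℕ → ℝ with h(n)/n → 0 such that ℓ(m) ≤ e^{h(n)} · ℓ(n) whenever M ≤ n ≤ m ≤ 2n. Then ℓ decays exponentially: there exist c > 0 and N such that ℓ(n) ≤ exp(−c n) for all n ≥ N. -/

import Mathlib

/-- Let `ℓ : ℕ → ℝ` be positive, `M ≥ 1` with `ℓ(M) ≤ e⁻¹` and
`ℓ(2n) ≤ ℓ(n)²` for all `n ≥ M`. Suppose in addition there is a nonnegative sub-linear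
`h : ℕ → ℝ` such that `ℓ(m) ≤ e^{h(n)} ℓ(n)` whenever `M ≤ n ≤ m ≤ 2n`. Then `ℓ` decays
exponentially. -/
theorem stmt6 (ℓ h : ℕ → ℝ) (M : ℕ)
    (hpos : ∀ n : ℕ, 1 ≤ n → 0 < ℓ n)
    (hM : 1 ≤ M) (hℓM : ℓ M ≤ Real.exp (-1))
    (hrec : ∀ n : ℕ, M ≤ n → ℓ (2 * n) ≤ (ℓ n) ^ 2)
    (hhnonneg : ∀ n : ℕ, 1 ≤ n → 0 ≤ h n)
    (hhsub : Filter.Tendsto (fun n : ℕ => h n / n) Filter.atTop (nhds 0))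
    (hcomp : ∀ n m : ℕ, M ≤ n → n ≤ m → m ≤ 2 * n → ℓ m ≤ Real.exp (h n) * ℓ n) :
    ∃ c : ℝ, 0 < c ∧ ∃ N : ℕ, ∀ n : ℕ, N ≤ n → ℓ n ≤ Real.exp (-c * n) := by
  have hMpos : (0:ℝ) < M := by exact_mod_cast hM
  -- dyadic decay
  have key : ∀ k : ℕ, ℓ (2 ^ k * M) ≤ Real.exp (-(2 ^ k : ℝ)) := by
    intro k
    induction k with
    | zero => simpa using hℓM
    | succ k ih =>
      have hMk : M ≤ 2 ^ k * M := Nat.le_mul_of_pos_left M (by positivity)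
      have h1 : ℓ (2 * (2 ^ k * M)) ≤ (ℓ (2 ^ k * M)) ^ 2 := hrec _ hMk
      have hpos' : 0 < ℓ (2 ^ k * M) := hpos _ (le_trans hM hMk)
      have h2 : (ℓ (2 ^ k * M)) ^ 2 ≤ (Real.exp (-(2 ^ k : ℝ))) ^ 2 :=
        pow_le_pow_left₀ hpos'.le ih 2
      have heq : 2 ^ (k+1) * M = 2 * (2 ^ k * M) := by ring
      rw [heq]
      refine (h1.trans h2).trans_eq ?_
      rw [sq, ← Real.exp_add]
      congr 1
      push_cast
      ring
  -- sub-linearity threshold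
  obtain ⟨N₀, hN₀⟩ := Metric.tendsto_atTop.mp hhsub (1 / (2 * M)) (by positivity)
  refine ⟨1 / (4 * M), by positivity, 2 ^ N₀ * M, fun n hn => ?_⟩
  have hMn : M ≤ n := le_trans (Nat.le_mul_of_pos_left M (by positivity)) hn
  set q := n / M with hq
  have hq1 : 1 ≤ q := Nat.one_le_div_iff (by omega) |>.mpr hMn
  set k := Nat.log 2 q with hk
  have h2k : 2 ^ k ≤ q := Nat.pow_log_le_self 2 (by omega)
  have hq2 : q < 2 ^ (k + 1) := Nat.lt_pow_succ_log_self (by norm_num) q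
  have hlow : 2 ^ k * M ≤ n := le_trans (Nat.mul_le_mul_right M h2k) (Nat.div_mul_le_self n M)
  have hup : n ≤ 2 ^ (k + 1) * M := by
    have h1 : n < (q + 1) * M := (Nat.div_lt_iff_lt_mul (by omega)).mp (by omega)
    have h2 : (q + 1) * M ≤ 2 ^ (k+1) * M := Nat.mul_le_mul_right M hq2
    omega
  have hkN₀ : N₀ ≤ k := by
    have h2N : 2 ^ N₀ ≤ q := (Nat.le_div_iff_mul_le (by omega)).mpr hn
    exact (Nat.le_log_iff_pow_le (by norm_num) (by omega)).mpr h2N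
  set m := 2 ^ k * M with hm
  have hmN₀ : N₀ ≤ m := by
    have : k < 2 ^ k := Nat.lt_two_pow_self
    calc N₀ ≤ k := hkN₀
      _ ≤ 2 ^ k := this.le
      _ ≤ 2 ^ k * M := Nat.le_mul_of_pos_right _ (by omega)
  have hM1m : M ≤ m := Nat.le_mul_of_pos_left M (by positivity)
  have hmpos : (0:ℝ) < m := by
    have : 1 ≤ m := le_trans hM hM1m
    exact_mod_cast Nat.lt_of_lt_of_le Nat.zero_lt_one this
  -- bound on h m
  have hhm : h m ≤ (2 ^ k : ℝ) / 2 := by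
    have := hN₀ m hmN₀
    rw [Real.dist_eq, sub_zero] at this
    have habs : h m / m < 1 / (2 * M) := (abs_lt.mp this).2
    have hmcast : (m : ℝ) = 2 ^ k * M := by push_cast [hm]; ring
    have hlt : h m < 1 / (2 * M) * m := by
      rwa [div_lt_iff₀ hmpos] at habs
    rw [hmcast] at hlt
    have heq : 1 / (2 * (M:ℝ)) * ((2 ^ k : ℝ) * M) = (2 ^ k : ℝ) / 2 := by
      field_simp
    linarith [heq ▸ hlt]
  -- combine
  have hstep : ℓ n ≤ Real.exp (h m) * ℓ m := by
    refine hcomp m n hM1m hlow ?_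
    calc n ≤ 2 ^ (k+1) * M := hup
      _ = 2 * m := by rw [hm]; ring
  have hℓm : ℓ m ≤ Real.exp (-(2 ^ k : ℝ)) := key k
  have hexp : Real.exp (h m) * ℓ m ≤ Real.exp (-(2 ^ k : ℝ) / 2) := by
    calc Real.exp (h m) * ℓ m ≤ Real.exp (h m) * Real.exp (-(2 ^ k : ℝ)) := by
          exact mul_le_mul_of_nonneg_left hℓm (Real.exp_pos _).le
      _ = Real.exp (h m - 2 ^ k) := by rw [← Real.exp_add]; ring_nf
      _ ≤ Real.exp (-(2 ^ k : ℝ) / 2) := by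
          apply Real.exp_le_exp.mpr; linarith
  refine (hstep.trans hexp).trans (Real.exp_le_exp.mpr ?_)
  have hupR : (n : ℝ) ≤ 2 ^ (k+1) * M := by exact_mod_cast hup
  have : (n : ℝ) / (4 * M) ≤ (2 ^ k : ℝ) / 2 := by
    rw [div_le_div_iff₀ (by positivity) (by norm_num)]
    have h2 : ((2:ℝ)) ^ (k+1) = 2 * 2 ^ k := by ring
    rw [h2] at hupR
    nlinarith [hupR]
  have : -(2 ^ k : ℝ) / 2 ≤ -(n / (4 * M)) := by linarith
  calc -(2 ^ k : ℝ) / 2 ≤ -(n / (4 * M)) := this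
    _ = -(1 / (4 * M)) * n := by field_simp
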